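/- (Troesch's isoperimetric inequality for sloshing, discussed in the paper) Let r₀ > 0, let h ∈ C¹([0, r₀]) satisfy h > 0 on [0, r₀) and h(r₀) = 0, and let W = {(x, y, z) ∈ ℝ³ : x² + z² < r₀², −h(√(x² + z²)) < y < 0} be the axially symmetric container lying strictly below the free surface disk F = {x² + z² < r₀²}. Then the fundamental sloshing eigenvalue satisfies ν₁(W) ≤ (8/r₀⁴) ∫₀^{r₀} h(r) r dr, and equality occurs for the parabolic bottom h_iso(r) = ν₁(W) (r₀² − r²)/2. -/

import Mathlib

open MeasureTheory Set
open scoped RealInnerProductSpace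

noncomputable section

abbrev Plane : Type := EuclideanSpace ℝ (Fin 2)
abbrev Space3 : Type := EuclideanSpace ℝ (Fin 3)

/-- The point of `ℝ³` with horizontal coordinates `q` and vertical coordinate `y`. -/
def emb (q : Plane) (y : ℝ) : Space3 :=
  (EuclideanSpace.equiv (Fin 3) ℝ).symm ![q 0, q 1, y]

/-- The horizontal projection of a point of `ℝ³`. -/
def horiz (p : Space3) : Plane :=
  (EuclideanSpace.equiv (Fin 2) ℝ).symm ![p 0, p 1]

/-- The finite-depth vertical cylinder `F × (-d, 0)`. -/
def cylinder (F : Set Plane) (d : ℝ) : Set Space3 :=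
  {p | horiz p ∈ F ∧ p 2 ∈ Ioo (-d) 0}

/-- The infinitely deep vertical cylinder `F × (-∞, 0)`. -/
def deepCylinder (F : Set Plane) : Set Space3 :=
  {p | horiz p ∈ F ∧ p 2 < 0}

/-- The free surface `F × {0}` as a subset of `ℝ³`. -/
def freeSurface (F : Set Plane) : Set Space3 :=
  {p | horiz p ∈ F ∧ p 2 = 0}

/-- A (bounded) Lipschitz domain: an open connected nonempty set satisfying the
uniform interior cone condition near every boundary point. -/
def IsLipschitzDomain {E : Type*} [NormedAddCommGroup E] [NormedSpace ℝ E] (Ω : Set E) : Prop :=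
  IsOpen Ω ∧ Ω.Nonempty ∧ IsConnected Ω ∧
    ∀ x ∈ frontier Ω, ∃ e : E, ‖e‖ = 1 ∧ ∃ ε δ : ℝ, 0 < ε ∧ 0 < δ ∧
      ∀ y ∈ Metric.ball x δ ∩ closure Ω, ∀ t : ℝ, 0 < t → t < δ →
        ∀ v : E, ‖v‖ < ε * t → y + t • e + v ∈ Ω

/-- The Rayleigh quotient of the sloshing problem. -/
def sloshRayleigh (W : Set Space3) (F : Set Plane) (φ : Space3 → ℝ) : ℝ :=
  (∫ p in W, ‖fderiv ℝ φ p‖ ^ 2) / (∫ q in F, (φ (emb q 0)) ^ 2)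

/-- Membership in the variational space of the sloshing problem: an `H¹(W)` function
(modelled by a `C¹` function with finite `H¹` norm on `W`) whose trace on the free
surface `F × {0}` is square integrable with mean zero. -/
def sloshTestFun (W : Set Space3) (F : Set Plane) (φ : Space3 → ℝ) : Prop :=
  ContDiff ℝ 1 φ ∧
  IntegrableOn (fun p => (φ p) ^ 2) W ∧
  IntegrableOn (fun p => ‖fderiv ℝ φ p‖ ^ 2) W ∧
  IntegrableOn (fun q => φ (emb q 0)) F ∧
  IntegrableOn (fun q => (φ (emb q 0)) ^ 2) F ∧
  (∫ q in F, φ (emb q 0)) = 0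

/-- Admissible test function for the fundamental sloshing eigenvalue. -/
def sloshAdmissible (W : Set Space3) (F : Set Plane) (φ : Space3 → ℝ) : Prop :=
  sloshTestFun W F φ ∧ 0 < ∫ q in F, (φ (emb q 0)) ^ 2

/-- The fundamental sloshing eigenvalue `ν₁` of a container `W` with free surface `F`. -/
def sloshNu1 (W : Set Space3) (F : Set Plane) : ℝ :=
  sInf {r | ∃ φ : Space3 → ℝ, sloshAdmissible W F φ ∧ r = sloshRayleigh W F φ}

/-- The first nonzero Neumann eigenvalue `μ₁` of a planar domain `F`. -/
def neumannMu1 (F : Set Plane) : ℝ :=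
  sInf {r | ∃ u : Plane → ℝ, ContDiff ℝ 1 u ∧
    IntegrableOn u F ∧ IntegrableOn (fun q => (u q) ^ 2) F ∧
    IntegrableOn (fun q => ‖fderiv ℝ u q‖ ^ 2) F ∧
    (∫ q in F, u q) = 0 ∧ 0 < ∫ q in F, (u q) ^ 2 ∧
    r = (∫ q in F, ‖fderiv ℝ u q‖ ^ 2) / (∫ q in F, (u q) ^ 2)}

/-- The perimeter of a planar set: the one-dimensional Hausdorff measure of its boundary. -/
def perim (F : Set Plane) : ℝ := (μH[1] (frontier F)).toReal

/-- A reflection of the Euclidean plane in a line: an isometric involution which fixes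
at least two points but is not the identity. -/
def IsLineReflection (f : Plane ≃ᵃⁱ[ℝ] Plane) : Prop :=
  (∀ p, f (f p) = p) ∧ (∃ p q : Plane, p ≠ q ∧ f p = p ∧ f q = q) ∧ (∃ p, f p ≠ p)

/-- `F` has (at least) two axes of symmetry. -/
def HasTwoSymmetryAxes (F : Set Plane) : Prop :=
  ∃ f g : Plane ≃ᵃⁱ[ℝ] Plane, IsLineReflection f ∧ IsLineReflection g ∧
    f '' F = F ∧ g '' F = F ∧ f ≠ g

/-- A container with vertical side walls over the free surface `F`: either the
infinitely deep cylinder `F × (-∞, 0)`, or the finite-depth cylinder `F × (-d, 0)`,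
or more generally a bounded Lipschitz domain contained in some `F × (-d, 0)` whose
boundary contains `F × {0}`. -/
def IsVerticalContainer (F : Set Plane) (W : Set Space3) : Prop :=
  W = deepCylinder F ∨ (∃ d : ℝ, 0 < d ∧ W = cylinder F d) ∨
    (∃ d : ℝ, 0 < d ∧ Bornology.IsBounded W ∧ IsLipschitzDomain W ∧
      W ⊆ cylinder F d ∧ freeSurface F ⊆ frontier W)

/-- `F` is, up to a rigid motion and scaling, an open square. -/
def IsSquareShape (F : Set Plane) : Prop :=
  ∃ a : ℝ, 0 < a ∧ ∃ f : Plane ≃ᵃⁱ[ℝ] Plane,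
    F = f '' {p : Plane | p 0 ∈ Ioo 0 a ∧ p 1 ∈ Ioo 0 a}

/-- `F` is, up to a rigid motion and scaling, an open equilateral triangle. -/
def IsEquilateralTriangleShape (F : Set Plane) : Prop :=
  ∃ p q r : Plane, p ≠ q ∧ dist p q = dist q r ∧ dist q r = dist r p ∧
    F = interior (convexHull ℝ {p, q, r})

section TroeschAux

open Metric

lemma emb_apply_zero (q : Plane) (y : ℝ) : emb q y 0 = q 0 := rfl
lemma emb_apply_two (q : Plane) (y : ℝ) : emb q y 2 = y := rfl

lemma horiz_emb (q : Plane) (y : ℝ) : horiz (emb q y) = q := by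
  ext i; fin_cases i <;> rfl

lemma horiz_apply (p : Space3) (i : Fin 2) : horiz p i = ![p 0, p 1] i := rfl

lemma coord_abs_le_norm {n : ℕ} (p : EuclideanSpace ℝ (Fin n)) (i : Fin n) : |p i| ≤ ‖p‖ := by
  rw [EuclideanSpace.norm_eq]
  have h1 : |p i| = Real.sqrt (|p i| ^ 2) := by
    rw [Real.sqrt_sq (abs_nonneg _)]
  rw [h1]
  apply Real.sqrt_le_sqrt
  rw [sq_abs]
  have : (p i) ^ 2 = ‖p i‖ ^ 2 := by rw [Real.norm_eq_abs, sq_abs]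
  rw [this]
  exact Finset.single_le_sum (f := fun j => ‖p j‖ ^ 2) (fun j _ => by positivity)
    (Finset.mem_univ i)

lemma continuous_coord {n : ℕ} (i : Fin n) :
    Continuous (fun p : EuclideanSpace ℝ (Fin n) => p i) := by
  have : (fun p : EuclideanSpace ℝ (Fin n) => p i) = ⇑(EuclideanSpace.proj (𝕜 := ℝ) i) := by
    funext p; simp
  rw [this]; exact (EuclideanSpace.proj i).continuous

lemma continuous_horiz : Continuous horiz := by
  unfold horiz
  refine Continuous.comp ?_ ?_
  · exact (EuclideanSpace.equiv (Fin 2) ℝ).symm.continuous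
  · refine continuous_pi fun i => ?_
    fin_cases i
    · exact continuous_coord 0
    · exact continuous_coord 1

lemma plane_norm_sq (q : Plane) : ‖q‖ ^ 2 = q 0 ^ 2 + q 1 ^ 2 := by
  rw [EuclideanSpace.norm_eq, Real.sq_sqrt (by positivity)]
  simp [Fin.sum_univ_two, sq_abs]

lemma measurePreserving_embProd :
    MeasurePreserving (fun z : Plane × ℝ => emb z.1 z.2) volume volume := by
  have e2 := PiLp.volume_preserving_ofLp (Fin 2)
  have e3 := PiLp.volume_preserving_toLp (Fin 3)
  have hpi2 : (volume : Measure (Fin 2 → ℝ)) = Measure.pi fun _ => volume := volume_pi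
  have hpi3 : (volume : Measure (Fin 3 → ℝ)) = Measure.pi fun _ => volume := volume_pi
  have m1 : MeasurePreserving
      (fun z : Plane × ℝ => (WithLp.ofLp z.1, z.2))
      volume ((volume : Measure (Fin 2 → ℝ)).prod volume) := by
    rw [show (volume : Measure (Plane × ℝ)) = (volume : Measure Plane).prod volume from rfl]
    exact e2.prod (MeasurePreserving.id _)
  have m2 : MeasurePreserving (Prod.swap : (Fin 2 → ℝ) × ℝ → ℝ × (Fin 2 → ℝ))
      ((volume : Measure (Fin 2 → ℝ)).prod volume)
      ((volume : Measure ℝ).prod (volume : Measure (Fin 2 → ℝ))) :=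
    Measure.measurePreserving_swap
  have m3 : MeasurePreserving
      (⇑(MeasurableEquiv.piFinSuccAbove (fun _ : Fin 3 => ℝ) 2).symm)
      ((volume : Measure ℝ).prod (volume : Measure (Fin 2 → ℝ)))
      (volume : Measure (Fin 3 → ℝ)) := by
    rw [hpi2, hpi3]
    exact (measurePreserving_piFinSuccAbove (fun _ : Fin 3 => volume) 2).symm _
  have mtot := (e3.comp (m3.comp (m2.comp m1)))
  convert mtot using 1
  · rfl
  funext z
  show emb z.1 z.2 = _
  ext i
  fin_cases i <;>
    simp [emb, MeasurableEquiv.piFinSuccAbove, Fin.insertNth, Fin.succAboveCases] <;> rfl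

end TroeschAux

section TroeschAux2

open Metric

lemma integral_ball_radial (r₀ : ℝ) (f : ℝ → ℝ) :
    ∫ q in Metric.ball (0 : Plane) r₀, f ‖q‖ =
      2 * (volume (Metric.ball (0 : Plane) 1)).toReal * ∫ r in Ioo (0:ℝ) r₀, r * f r := by
  set g : ℝ → ℝ := fun r => if r < r₀ then f r else 0 with hg
  have h1 : ∫ q in Metric.ball (0 : Plane) r₀, f ‖q‖
      = ∫ q in Metric.ball (0 : Plane) r₀, g ‖q‖ := by
    refine setIntegral_congr_fun measurableSet_ball fun q hq => ?_
    rw [mem_ball_zero_iff] at hq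
    simp [hg, hq]
  have h2 : ∫ q in Metric.ball (0 : Plane) r₀, g ‖q‖ = ∫ q : Plane, g ‖q‖ := by
    rw [← integral_indicator measurableSet_ball]
    congr 1
    funext q
    by_cases hq : q ∈ Metric.ball (0 : Plane) r₀
    · simp [Set.indicator_of_mem hq]
    · rw [Set.indicator_of_notMem hq]
      rw [mem_ball_zero_iff, not_lt] at hq
      simp [hg, not_lt.2 hq]
  have h3 := MeasureTheory.integral_fun_norm_addHaar (volume : Measure Plane) g
  rw [finrank_euclideanSpace_fin] at h3
  have h4 : ∫ y in Ioi (0:ℝ), y ^ (2 - 1) • g y = ∫ r in Ioo (0:ℝ) r₀, r * f r := by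
    have : (fun y : ℝ => y ^ (2-1) • g y) = fun y => (Iio r₀).indicator (fun r => r * f r) y := by
      funext y
      by_cases hy : y < r₀ <;> simp [hg, hy, Set.indicator_apply, mem_Iio]
    calc ∫ y in Ioi (0:ℝ), y ^ (2 - 1) • g y
        = ∫ y in Ioi (0:ℝ), (Iio r₀).indicator (fun r => r * f r) y := by rw [this]
      _ = ∫ r in Ioi (0:ℝ) ∩ Iio r₀, r * f r := setIntegral_indicator measurableSet_Iio
      _ = ∫ r in Ioo (0:ℝ) r₀, r * f r := by rw [Set.Ioi_inter_Iio]
  rw [h1, h2, h3, h4]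
  simp only [smul_eq_mul, nsmul_eq_mul, measureReal_def, Nat.cast_ofNat]
  ring

lemma integrableOn_ball_of_continuous {r₀ : ℝ} {f : Plane → ℝ} (hf : Continuous f) :
    IntegrableOn f (Metric.ball (0 : Plane) r₀) := by
  exact ((hf.continuousOn).integrableOn_compact (isCompact_closedBall 0 r₀)).mono_set
    ball_subset_closedBall

lemma integral_ball_coord_zero (r₀ : ℝ) :
    ∫ q in Metric.ball (0 : Plane) r₀, q 0 = 0 := by
  have mp := Measure.measurePreserving_neg (volume : Measure Plane)
  have me : MeasurableEmbedding (Neg.neg : Plane → Plane) :=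
    (Homeomorph.neg Plane).measurableEmbedding
  have key := mp.setIntegral_preimage_emb me (fun q => q 0) (Metric.ball (0 : Plane) r₀)
  have hpre : (Neg.neg : Plane → Plane) ⁻¹' (Metric.ball (0 : Plane) r₀)
      = Metric.ball (0 : Plane) r₀ := by
    ext q; simp [mem_ball_zero_iff]
  rw [hpre] at key
  have hneg : ∫ q in Metric.ball (0 : Plane) r₀, (-q) 0
      = - ∫ q in Metric.ball (0 : Plane) r₀, q 0 := by
    rw [← integral_neg]
    refine setIntegral_congr_fun measurableSet_ball fun q _ => ?_
    simp
  rw [hneg] at key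
  linarith

lemma integral_ball_coord_sq (r₀ : ℝ) (hr₀ : 0 < r₀) :
    ∫ q in Metric.ball (0 : Plane) r₀, (q 0) ^ 2
      = (volume (Metric.ball (0 : Plane) 1)).toReal * r₀ ^ 4 / 4 := by
  set V₁ := (volume (Metric.ball (0 : Plane) 1)).toReal with hV₁
  have hswap : ∫ q in Metric.ball (0 : Plane) r₀, (q 1) ^ 2
      = ∫ q in Metric.ball (0 : Plane) r₀, (q 0) ^ 2 := by
    set σ := LinearIsometryEquiv.piLpCongrLeft 2 ℝ ℝ (Equiv.swap (0 : Fin 2) 1) with hσ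
    have mp : MeasurePreserving (⇑σ) (volume : Measure Plane) volume :=
      σ.measurePreserving
    have me : MeasurableEmbedding (⇑σ) := σ.toHomeomorph.measurableEmbedding
    have key := mp.setIntegral_preimage_emb me (fun q => (q 1) ^ 2)
      (Metric.ball (0 : Plane) r₀)
    have hpre : (⇑σ) ⁻¹' (Metric.ball (0 : Plane) r₀) = Metric.ball (0 : Plane) r₀ := by
      ext q; simp [mem_ball_zero_iff, σ.norm_map]
    rw [hpre] at key
    rw [← key]
    refine setIntegral_congr_fun measurableSet_ball fun q _ => ?_
    have : σ q 1 = q 0 := by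
      have h10 : (Equiv.swap (0 : Fin 2) 1) 1 = 0 := Equiv.swap_apply_right 0 1
      simp [hσ, LinearIsometryEquiv.piLpCongrLeft_apply, Equiv.piCongrLeft'_apply,
        Equiv.symm_apply_eq]
    rw [this]
  have hadd : ∫ q in Metric.ball (0 : Plane) r₀, ((q 0) ^ 2 + (q 1) ^ 2)
      = (∫ q in Metric.ball (0 : Plane) r₀, (q 0) ^ 2)
        + ∫ q in Metric.ball (0 : Plane) r₀, (q 1) ^ 2 :=
    integral_add (integrableOn_ball_of_continuous (by exact (continuous_coord 0).pow 2))
      (integrableOn_ball_of_continuous (by exact (continuous_coord 1).pow 2))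
  have hnorm : ∫ q in Metric.ball (0 : Plane) r₀, ((q 0) ^ 2 + (q 1) ^ 2)
      = ∫ q in Metric.ball (0 : Plane) r₀, (fun r : ℝ => r ^ 2) ‖q‖ := by
    refine setIntegral_congr_fun measurableSet_ball fun q _ => ?_
    show q 0 ^ 2 + q 1 ^ 2 = ‖q‖ ^ 2
    rw [plane_norm_sq q]
  have hrad := integral_ball_radial r₀ (fun r => r ^ 2)
  have hval : ∫ r in Ioo (0:ℝ) r₀, r * r ^ 2 = r₀ ^ 4 / 4 := by
    have : ∫ r in Ioo (0:ℝ) r₀, r * r ^ 2 = ∫ r in Ioo (0:ℝ) r₀, r ^ 3 := by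
      refine setIntegral_congr_fun measurableSet_Ioo fun r _ => by ring
    rw [this, ← integral_Ioc_eq_integral_Ioo, ← intervalIntegral.integral_of_le hr₀.le,
      integral_pow]
    norm_num
  rw [hval] at hrad
  rw [hnorm, hrad, hswap] at hadd
  linarith

end TroeschAux2

/-- Troesch's isoperimetric inequality for sloshing. For an axially
symmetric container `W = {x² + z² < r₀², -h(√(x² + z²)) < y < 0}` below the free-surface
disk `F` of radius `r₀`, with bottom profile `h ∈ C¹([0, r₀])`, `h > 0` on `[0, r₀)` and
`h(r₀) = 0`, one has `ν₁(W) ≤ (8/r₀⁴) ∫₀^{r₀} h(r) r dr`, with equality for the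
parabolic bottom `h(r) = ν₁(W) (r₀² - r²)/2`. -/
theorem troesch_isoperimetric (r₀ : ℝ) (hr₀ : 0 < r₀) (h : ℝ → ℝ)
    (hC1 : ContDiffOn ℝ 1 h (Icc 0 r₀)) (hpos : ∀ r ∈ Ico (0:ℝ) r₀, 0 < h r)
    (hzero : h r₀ = 0) (F : Set Plane) (hF : F = Metric.ball (0 : Plane) r₀)
    (W : Set Space3)
    (hW : W = {p : Space3 | horiz p ∈ Metric.ball (0 : Plane) r₀ ∧
      -h ‖horiz p‖ < p 2 ∧ p 2 < 0}) :
    sloshNu1 W F ≤ (8 / r₀ ^ 4) * ∫ r in (0:ℝ)..r₀, h r * r ∧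
    ((∀ r ∈ Icc (0:ℝ) r₀, h r = sloshNu1 W F * (r₀ ^ 2 - r ^ 2) / 2) →
      sloshNu1 W F = (8 / r₀ ^ 4) * ∫ r in (0:ℝ)..r₀, h r * r) := by

  subst hF hW
  set Wd : Set Space3 := {p : Space3 | horiz p ∈ Metric.ball (0 : Plane) r₀ ∧
      -h ‖horiz p‖ < p 2 ∧ p 2 < 0} with hWd
  set V₁ : ℝ := (volume (Metric.ball (0 : Plane) 1)).toReal with hV₁
  have hV₁pos : 0 < V₁ := ENNReal.toReal_pos
    (Metric.measure_ball_pos volume 0 one_pos).ne' measure_ball_lt_top.ne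
  set I : ℝ := ∫ r in (0:ℝ)..r₀, h r * r with hI
  have hInn : 0 ≤ I := by
    rw [hI]
    refine intervalIntegral.integral_nonneg hr₀.le fun u hu => ?_
    rcases lt_or_eq_of_le hu.2 with h' | h'
    · exact mul_nonneg (hpos u ⟨hu.1, h'⟩).le hu.1
    · simp [h', hzero]
  set hext : ℝ → ℝ := fun r => h (min |r| r₀) with hhext
  have hext_eq : ∀ s : ℝ, 0 ≤ s → s ≤ r₀ → hext s = h s := by
    intro s h0 h1; rw [hhext]; simp [abs_of_nonneg h0, min_eq_left h1]
  have hext_cont : Continuous hext := by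
    refine hC1.continuousOn.comp_continuous (by continuity) fun r => ?_
    exact ⟨le_min (abs_nonneg r) hr₀.le, min_le_right _ _⟩
  have hWeq : Wd = {p : Space3 | ‖horiz p‖ < r₀ ∧ -hext ‖horiz p‖ < p 2 ∧ p 2 < 0} := by
    rw [hWd]
    ext p
    rw [mem_setOf_eq, mem_setOf_eq, mem_ball_zero_iff]
    constructor
    · rintro ⟨h1, h2, h3⟩
      exact ⟨h1, by rwa [hext_eq _ (norm_nonneg _) h1.le], h3⟩
    · rintro ⟨h1, h2, h3⟩
      exact ⟨h1, by rwa [hext_eq _ (norm_nonneg _) h1.le] at h2, h3⟩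
  have c1 : Continuous fun p : Space3 => ‖horiz p‖ := continuous_norm.comp continuous_horiz
  have c2 : Continuous fun p : Space3 => p 2 := continuous_coord 2
  have hWopen : IsOpen Wd := by
    rw [hWeq]
    exact (isOpen_lt c1 continuous_const).and
      ((isOpen_lt ((hext_cont.comp c1).neg) c2).and (isOpen_lt c2 continuous_const))
  have hmeasW : MeasurableSet Wd := hWopen.measurableSet
  have hpre : (fun z : Plane × ℝ => emb z.1 z.2) ⁻¹' Wd
      = regionBetween (fun q : Plane => -hext ‖q‖) (fun _ => (0:ℝ))
        (Metric.ball (0 : Plane) r₀) := by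
    ext z
    obtain ⟨q, y⟩ := z
    simp only [hWeq, mem_preimage, mem_setOf_eq, horiz_emb, emb_apply_two,
      regionBetween, mem_Ioo, mem_ball_zero_iff]
  have hfint : IntegrableOn (fun q : Plane => -hext ‖q‖) (Metric.ball (0 : Plane) r₀) :=
    integrableOn_ball_of_continuous ((hext_cont.comp continuous_norm).neg)
  have hgint : IntegrableOn (fun _ : Plane => (0:ℝ)) (Metric.ball (0 : Plane) r₀) := by
    simp [IntegrableOn]
  have hle0 : ∀ q ∈ Metric.ball (0 : Plane) r₀,
      (fun q : Plane => -hext ‖q‖) q ≤ (fun _ : Plane => (0:ℝ)) q := by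
    intro q hq
    rw [mem_ball_zero_iff] at hq
    have hp := hpos ‖q‖ ⟨norm_nonneg _, hq⟩
    simp only
    rw [hext_eq _ (norm_nonneg _) hq.le]
    linarith
  have hregion := volume_regionBetween_eq_integral hfint hgint measurableSet_ball hle0
  have hIoo : ∫ r in Ioo (0:ℝ) r₀, r * hext r = I := by
    have e1 : ∫ r in Ioo (0:ℝ) r₀, r * hext r = ∫ r in Ioo (0:ℝ) r₀, h r * r := by
      refine setIntegral_congr_fun measurableSet_Ioo fun r hr => ?_
      rw [hext_eq r hr.1.le hr.2.le]; ring
    rw [e1, hI, intervalIntegral.integral_of_le hr₀.le, integral_Ioc_eq_integral_Ioo]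
  have hvol : volume Wd = ENNReal.ofReal (2 * V₁ * I) := by
    have h0 := measurePreserving_embProd.measure_preimage hmeasW.nullMeasurableSet
    rw [hpre] at h0
    rw [← h0,
      show (volume : Measure (Plane × ℝ)) = (volume : Measure Plane).prod volume from rfl,
      hregion]
    congr 1
    have hsub : ((fun _ : Plane => (0:ℝ)) - fun q : Plane => -hext ‖q‖)
        = fun q : Plane => hext ‖q‖ := by
      funext q; simp
    rw [hsub, integral_ball_radial r₀ hext, hIoo, hV₁]
  have hWvol_ne : volume Wd ≠ ⊤ := by rw [hvol]; exact ENNReal.ofReal_ne_top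
  -- the test function
  set L : Space3 →L[ℝ] ℝ := EuclideanSpace.proj (0 : Fin 3) with hLdef
  set φ : Space3 → ℝ := fun p => p 0 with hφ
  have hφL : φ = ⇑L := by funext p; simp [hφ, hLdef]
  have hLnorm : ‖L‖ = 1 := by
    apply le_antisymm
    · refine L.opNorm_le_bound zero_le_one fun x => ?_
      have hx : L x = x 0 := by simp [hLdef]
      rw [hx, one_mul, Real.norm_eq_abs]
      exact coord_abs_le_norm x 0
    · have h1 := L.le_opNorm (EuclideanSpace.single (0 : Fin 3) (1:ℝ))
      rw [show L (EuclideanSpace.single (0 : Fin 3) (1:ℝ)) = 1 by simp [hLdef]] at h1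
      simpa [EuclideanSpace.norm_single] using h1
  have hgradsq : (fun p : Space3 => ‖fderiv ℝ φ p‖ ^ 2) = fun _ : Space3 => (1:ℝ) := by
    funext p
    rw [hφL, L.fderiv, hLnorm]
    norm_num
  have hnum : ∫ p in Wd, ‖fderiv ℝ φ p‖ ^ 2 = 2 * V₁ * I := by
    rw [hgradsq, setIntegral_const, measureReal_def, hvol, smul_eq_mul, mul_one,
      ENNReal.toReal_ofReal (mul_nonneg (by positivity) hInn)]
  have htr : (fun q : Plane => φ (emb q 0)) = fun q : Plane => q 0 := rfl
  have htr2 : (fun q : Plane => (φ (emb q 0)) ^ 2) = fun q : Plane => (q 0) ^ 2 := rfl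
  have hden : ∫ q in Metric.ball (0:Plane) r₀, (φ (emb q 0)) ^ 2 = V₁ * r₀ ^ 4 / 4 := by
    rw [show (fun q : Plane => (φ (emb q 0)) ^ 2) = fun q : Plane => (q 0) ^ 2 from rfl]
    rw [integral_ball_coord_sq r₀ hr₀, hV₁]
  have hdenpos : 0 < ∫ q in Metric.ball (0:Plane) r₀, (φ (emb q 0)) ^ 2 := by
    rw [hden]; positivity
  have hadm : sloshAdmissible Wd (Metric.ball (0:Plane) r₀) φ := by
    refine ⟨⟨?_, ?_, ?_, ?_, ?_, ?_⟩, hdenpos⟩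
    · rw [hφL]; exact L.contDiff
    · refine Measure.integrableOn_of_bounded (M := r₀ ^ 2) hWvol_ne
        (((continuous_coord (0 : Fin 3)).pow 2).aestronglyMeasurable) ?_
      rw [ae_restrict_iff' hmeasW]
      refine Filter.Eventually.of_forall fun p hp => ?_
      rw [hWd, mem_setOf_eq, mem_ball_zero_iff] at hp
      have h1 : |p 0| ≤ ‖horiz p‖ := by
        have h2 := coord_abs_le_norm (horiz p) 0
        rwa [show horiz p 0 = p 0 from rfl] at h2
      have h3 : |p 0| ≤ r₀ := h1.trans hp.1.le
      show ‖φ p ^ 2‖ ≤ r₀ ^ 2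
      simp only [hφ]
      rw [Real.norm_eq_abs, abs_pow]
      exact pow_le_pow_left₀ (abs_nonneg _) h3 2
    · rw [hgradsq]
      exact integrableOn_const hWvol_ne
    · rw [htr]
      exact integrableOn_ball_of_continuous (continuous_coord 0)
    · rw [htr2]
      exact integrableOn_ball_of_continuous ((continuous_coord 0).pow 2)
    · rw [htr, integral_ball_coord_zero]
  have hray : sloshRayleigh Wd (Metric.ball (0:Plane) r₀) φ = 8 / r₀ ^ 4 * I := by
    rw [sloshRayleigh, hnum, hden]
    rw [div_eq_iff (by positivity)]
    field_simp
    ring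
  have hbdd : BddBelow {r | ∃ ψ : Space3 → ℝ,
      sloshAdmissible Wd (Metric.ball (0:Plane) r₀) ψ ∧
        r = sloshRayleigh Wd (Metric.ball (0:Plane) r₀) ψ} := by
    refine ⟨0, fun r hr => ?_⟩
    obtain ⟨ψ, hψ, rfl⟩ := hr
    exact div_nonneg (integral_nonneg fun p => by positivity) hψ.2.le
  have hle1 : sloshNu1 Wd (Metric.ball (0:Plane) r₀) ≤ 8 / r₀ ^ 4 * I := by
    rw [sloshNu1]
    exact le_trans (csInf_le hbdd ⟨φ, hadm, rfl⟩) (le_of_eq hray)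
  refine ⟨hle1, ?_⟩
  intro heq
  set ν := sloshNu1 Wd (Metric.ball (0:Plane) r₀) with hν
  have hIval : I = ν * r₀ ^ 4 / 8 := by
    rw [hI, intervalIntegral.integral_congr (g := fun r => ν / 2 * (r₀ ^ 2 * r - r ^ 3))
      (fun r hr => by
        rw [uIcc_of_le hr₀.le] at hr
        rw [heq r hr]; ring)]
    rw [intervalIntegral.integral_const_mul,
      intervalIntegral.integral_sub
        ((by fun_prop : Continuous fun x : ℝ => r₀ ^ 2 * x).intervalIntegrable _ _)
        ((by fun_prop : Continuous fun x : ℝ => x ^ 3).intervalIntegrable _ _),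
      intervalIntegral.integral_const_mul, integral_id, integral_pow]
    norm_num
    ring
  rw [hIval]
  field_simp
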